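/- (Monotonicity of relative entropy under the Gibbs perturbation) Let σ be a full-rank density matrix, Π positive semidefinite, β > 0, and ρ* = exp(log σ − Π/β)/Tr(exp(log σ − Π/β)). Then Tr(Πρ*) ≤ Tr(Πσ). -/

import Mathlib

open Matrix ComplexOrder Kronecker
noncomputable section
variable {m n : Type*} [Fintype n] [DecidableEq n] [Fintype m] [DecidableEq m]

/-- Functional calculus for Hermitian matrices via the spectral theorem
(junk value `0` on non-Hermitian input). -/
def matFun (f : ℝ → ℝ) (A : Matrix n n ℂ) : Matrix n n ℂ :=
  if hA : A.IsHermitian then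
    (hA.eigenvectorUnitary : Matrix n n ℂ) *
      Matrix.diagonal (fun i => (f (hA.eigenvalues i) : ℂ)) *
      (star hA.eigenvectorUnitary : Matrix n n ℂ)
  else 0

/-- Matrix logarithm on the support (`Real.log 0 = 0` gives the `0 log 0 = 0` convention). -/
def matLog (A : Matrix n n ℂ) : Matrix n n ℂ := matFun Real.log A

/-- Matrix exponential (of a Hermitian matrix). -/
def matExp (A : Matrix n n ℂ) : Matrix n n ℂ := matFun Real.exp A

/-- A density matrix: positive semidefinite with trace one. -/
def IsDensity (ρ : Matrix n n ℂ) : Prop := ρ.PosSemidef ∧ ρ.trace = 1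

/-- Quantum relative entropy `S(ρ‖σ) = Tr (ρ (log ρ − log σ))`. -/
def qRelEnt (ρ σ : Matrix n n ℂ) : ℂ := (ρ * (matLog ρ - matLog σ)).trace

/-- `k`-fold tensor power of a matrix. -/
def tpow (ρ : Matrix n n ℂ) (k : ℕ) : Matrix (Fin k → n) (Fin k → n) ℂ :=
  Matrix.of fun i j => ∏ t, ρ (i t) (j t)

/-- Trace norm: the sum of singular values. -/
def traceNorm (A : Matrix n n ℂ) : ℝ :=
  ∑ i, Real.sqrt ((Matrix.posSemidef_conjTranspose_mul_self A).1.eigenvalues i)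

/-- Projection onto the strictly positive eigenspace of a Hermitian matrix. -/
def posProj (A : Matrix n n ℂ) : Matrix n n ℂ := matFun (fun x => if 0 < x then 1 else 0) A

/-- Positive part in the Jordan decomposition of a Hermitian matrix. -/
def posPart (A : Matrix n n ℂ) : Matrix n n ℂ := matFun (fun x => max x 0) A

/-- Projection onto the support of a Hermitian (e.g. PSD) matrix. -/
def suppProj (A : Matrix n n ℂ) : Matrix n n ℂ := matFun (fun x => if x = 0 then 0 else 1) A

set_option linter.unusedSectionVars false
set_option linter.unusedTactic false

lemma matFun_eq_cfc (f : ℝ → ℝ) {A : Matrix n n ℂ} (hA : A.IsHermitian) :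
    matFun f A = cfc f A := by
  rw [hA.cfc_eq, matFun, dif_pos hA, Matrix.IsHermitian.cfc]
  rfl

lemma matFun_isHermitian (f : ℝ → ℝ) {A : Matrix n n ℂ} (hA : A.IsHermitian) :
    (matFun f A).IsHermitian := by
  rw [matFun_eq_cfc f hA]
  exact cfc_predicate f A

lemma matFun_id {A : Matrix n n ℂ} (hA : A.IsHermitian) :
    matFun (fun x => x) A = A := by
  rw [matFun_eq_cfc _ hA]
  exact cfc_id' ℝ A hA

lemma trace_diag_conj (d e : n → ℂ) (M : Matrix n n ℂ) :
    (Matrix.diagonal d * M * Matrix.diagonal e * star M).trace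
      = ∑ i, ∑ j, d i * e j * ((Complex.normSq (M i j) : ℂ)) := by
  have hX : ∀ i j, (Matrix.diagonal d * M * Matrix.diagonal e) i j = d i * M i j * e j := by
    intro i j; rw [Matrix.mul_diagonal, Matrix.diagonal_mul]
  simp only [Matrix.trace, Matrix.diag_apply, Matrix.mul_apply, hX,
    Matrix.star_apply, Complex.star_def]
  refine Finset.sum_congr rfl fun i _ => Finset.sum_congr rfl fun j _ => ?_
  rw [← Complex.mul_conj]
  ring

lemma trace_conj_pair (d e : n → ℂ) (U V : Matrix n n ℂ)
    (hU : star U * U = 1) (hU' : U * star U = 1) :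
    (U * Matrix.diagonal d * star U * (V * Matrix.diagonal e * star V)).trace
      = ∑ i, ∑ j, d i * e j * ((Complex.normSq ((star U * V) i j) : ℂ)) := by
  have key : U * Matrix.diagonal d * star U * (V * Matrix.diagonal e * star V)
      = U * (Matrix.diagonal d * (star U * V) * Matrix.diagonal e * star (star U * V)) * star U := by
    simp only [StarMul.star_mul, star_star, Matrix.mul_assoc, hU', Matrix.mul_one]
  rw [key, Matrix.trace_mul_cycle, ← Matrix.mul_assoc, hU, Matrix.one_mul,
    trace_diag_conj]

lemma trace_matFun_mul (f g : ℝ → ℝ) {A B : Matrix n n ℂ} (hA : A.IsHermitian)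
    (hB : B.IsHermitian) :
    (matFun f A * matFun g B).trace
      = ∑ i, ∑ j, (f (hA.eigenvalues i) : ℂ) * (g (hB.eigenvalues j) : ℂ) *
          ((Complex.normSq ((star (hA.eigenvectorUnitary : Matrix n n ℂ) *
            (hB.eigenvectorUnitary : Matrix n n ℂ)) i j) : ℂ)) := by
  rw [matFun, dif_pos hA, matFun, dif_pos hB]
  exact trace_conj_pair _ _ _ _
    (Matrix.mem_unitaryGroup_iff'.mp hA.eigenvectorUnitary.2)
    (Matrix.mem_unitaryGroup_iff.mp hA.eigenvectorUnitary.2)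

lemma normSq_row_sum {M : Matrix n n ℂ} (h : M * star M = 1) (i : n) :
    ∑ j, Complex.normSq (M i j) = 1 := by
  have h2 : (M * star M) i i = 1 := by rw [h, Matrix.one_apply_eq]
  rw [Matrix.mul_apply] at h2
  simp only [Matrix.star_apply, Complex.star_def, Complex.mul_conj] at h2
  exact_mod_cast h2

lemma normSq_col_sum {M : Matrix n n ℂ} (h : star M * M = 1) (j : n) :
    ∑ i, Complex.normSq (M i j) = 1 := by
  have h2 : (star M * M) j j = 1 := by rw [h, Matrix.one_apply_eq]
  rw [Matrix.mul_apply] at h2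
  simp only [Matrix.star_apply, Complex.star_def] at h2
  have : ∀ x : ℕ, True := fun _ => trivial
  have h3 : ∑ i, ((Complex.normSq (M i j) : ℂ)) = 1 := by
    rw [← h2]
    refine Finset.sum_congr rfl fun i _ => ?_
    rw [← Complex.mul_conj]; ring
  exact_mod_cast h3

lemma same_sign (x y : ℝ) (hx : 0 < x) (hy : 0 < y) :
    0 ≤ (x - y) * (Real.log x - Real.log y) := by
  rcases le_total x y with h | h
  · have hl : Real.log x ≤ Real.log y := Real.log_le_log hx h
    nlinarith
  · have hl : Real.log y ≤ Real.log x := Real.log_le_log hy h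
    exact mul_nonneg (by linarith) (by linarith)

lemma klein_aux {A B : Matrix n n ℂ} (hA : A.IsHermitian) (hB : B.IsHermitian)
    (ha : ∀ i, 0 < hA.eigenvalues i) (hb : ∀ i, 0 < hB.eigenvalues i) :
    0 ≤ ((A - B) * (matLog A - matLog B)).trace := by
  set U : Matrix n n ℂ := (hA.eigenvectorUnitary : Matrix n n ℂ) with hU
  set V : Matrix n n ℂ := (hB.eigenvectorUnitary : Matrix n n ℂ) with hV
  set a := hA.eigenvalues with hai
  set b := hB.eigenvalues with hbi
  have hUU : star U * U = 1 := Matrix.mem_unitaryGroup_iff'.mp hA.eigenvectorUnitary.2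
  have hUU' : U * star U = 1 := Matrix.mem_unitaryGroup_iff.mp hA.eigenvectorUnitary.2
  have hVV : star V * V = 1 := Matrix.mem_unitaryGroup_iff'.mp hB.eigenvectorUnitary.2
  have hVV' : V * star V = 1 := Matrix.mem_unitaryGroup_iff.mp hB.eigenvectorUnitary.2
  set M : Matrix n n ℂ := star U * V with hM
  set p : n → n → ℝ := fun i j => Complex.normSq (M i j) with hp
  have hMM : M * star M = 1 := by
    rw [hM, StarMul.star_mul, star_star]
    calc star U * V * (star V * U) = star U * (V * star V) * U := by
          simp only [Matrix.mul_assoc]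
      _ = 1 := by rw [hVV', Matrix.mul_one, hUU]
  have hMM' : star M * M = 1 := by
    rw [hM, StarMul.star_mul, star_star]
    calc star V * U * (star U * V) = star V * (U * star U) * V := by
          simp only [Matrix.mul_assoc]
      _ = 1 := by rw [hUU', Matrix.mul_one, hVV]
  have prow : ∀ i, ∑ j, p i j = 1 := fun i => normSq_row_sum hMM i
  have pcol : ∀ j, ∑ i, p i j = 1 := fun j => normSq_col_sum hMM' j
  -- the four trace terms
  have T1 : (A * matLog A).trace = ((∑ i, a i * Real.log (a i) : ℝ) : ℂ) := by
    rw [matLog]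
    nth_rewrite 1 [← matFun_id hA]
    rw [trace_matFun_mul _ _ hA hA, ← hU, hUU]
    push_cast
    rw [Finset.sum_congr rfl fun i _ => Finset.sum_eq_single i
      (fun j _ hj => by simp [Matrix.one_apply_ne (Ne.symm hj)])
      (fun h => absurd (Finset.mem_univ i) h)]
    refine Finset.sum_congr rfl fun i _ => ?_
    simp [Matrix.one_apply_eq]
    rfl
  have T4 : (B * matLog B).trace = ((∑ i, b i * Real.log (b i) : ℝ) : ℂ) := by
    rw [matLog]
    nth_rewrite 1 [← matFun_id hB]
    rw [trace_matFun_mul _ _ hB hB, ← hV, hVV]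
    push_cast
    rw [Finset.sum_congr rfl fun i _ => Finset.sum_eq_single i
      (fun j _ hj => by simp [Matrix.one_apply_ne (Ne.symm hj)])
      (fun h => absurd (Finset.mem_univ i) h)]
    refine Finset.sum_congr rfl fun i _ => ?_
    simp [Matrix.one_apply_eq]
    rfl
  have T2 : (A * matLog B).trace
      = ((∑ i, ∑ j, a i * Real.log (b j) * p i j : ℝ) : ℂ) := by
    rw [matLog]
    nth_rewrite 1 [← matFun_id hA]
    rw [trace_matFun_mul _ _ hA hB, ← hU, ← hV, ← hM]
    push_cast
    rfl
  have T3 : (B * matLog A).trace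
      = ((∑ i, ∑ j, b j * Real.log (a i) * p i j : ℝ) : ℂ) := by
    rw [matLog]
    nth_rewrite 1 [← matFun_id hB]
    rw [trace_matFun_mul _ _ hB hA, ← hU, ← hV]
    have hsM : star V * U = star M := by rw [hM, StarMul.star_mul, star_star]
    rw [hsM]
    rw [Finset.sum_comm]
    push_cast
    refine Finset.sum_congr rfl fun i _ => Finset.sum_congr rfl fun j _ => ?_
    rw [show (star M) j i = star (M i j) from Matrix.star_apply _ _ _, Complex.star_def,
      Complex.normSq_conj]
  have expand : ((A - B) * (matLog A - matLog B)).trace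
      = (A * matLog A).trace - (A * matLog B).trace
        - ((B * matLog A).trace - (B * matLog B).trace) := by
    rw [Matrix.sub_mul, Matrix.mul_sub, Matrix.mul_sub, Matrix.trace_sub, Matrix.trace_sub,
      Matrix.trace_sub]
  rw [expand, T1, T2, T3, T4]
  rw [show ((∑ i, a i * Real.log (a i) : ℝ) : ℂ) - ((∑ i, ∑ j, a i * Real.log (b j) * p i j : ℝ) : ℂ)
      - (((∑ i, ∑ j, b j * Real.log (a i) * p i j : ℝ) : ℂ) - ((∑ i, b i * Real.log (b i) : ℝ) : ℂ))
      = (((∑ i, a i * Real.log (a i)) - (∑ i, ∑ j, a i * Real.log (b j) * p i j)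
          - ((∑ i, ∑ j, b j * Real.log (a i) * p i j) - (∑ i, b i * Real.log (b i))) : ℝ) : ℂ)
    from by push_cast; ring]
  rw [show (0 : ℂ) = ((0 : ℝ) : ℂ) from rfl, Complex.real_le_real]
  have e1 : ∑ i, a i * Real.log (a i) = ∑ i, ∑ j, a i * Real.log (a i) * p i j := by
    refine Finset.sum_congr rfl fun i _ => ?_
    rw [← Finset.mul_sum, prow i, mul_one]
  have e2 : ∑ i, b i * Real.log (b i) = ∑ i, ∑ j, b j * Real.log (b j) * p i j := by
    rw [Finset.sum_comm]
    refine Finset.sum_congr rfl fun j _ => ?_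
    rw [← Finset.mul_sum, pcol j, mul_one]
  rw [e1, e2]
  have combine : ∀ i, (∑ j, a i * Real.log (a i) * p i j) - (∑ j, a i * Real.log (b j) * p i j)
      - ((∑ j, b j * Real.log (a i) * p i j) - (∑ j, b j * Real.log (b j) * p i j))
      = ∑ j, ((a i - b j) * (Real.log (a i) - Real.log (b j))) * p i j := by
    intro i
    rw [← Finset.sum_sub_distrib, ← Finset.sum_sub_distrib, ← Finset.sum_sub_distrib]
    exact Finset.sum_congr rfl fun j _ => by ring
  rw [← Finset.sum_sub_distrib, ← Finset.sum_sub_distrib, ← Finset.sum_sub_distrib,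
    Finset.sum_congr rfl fun i _ => combine i]
  refine Finset.sum_nonneg fun i _ => Finset.sum_nonneg fun j _ => ?_
  exact mul_nonneg (same_sign _ _ (ha i) (hb j)) (Complex.normSq_nonneg _)


lemma trace_matFun (f : ℝ → ℝ) {A : Matrix n n ℂ} (hA : A.IsHermitian) :
    (matFun f A).trace = ((∑ i, f (hA.eigenvalues i) : ℝ) : ℂ) := by
  rw [matFun, dif_pos hA, Matrix.trace_mul_cycle,
    Matrix.mem_unitaryGroup_iff'.mp hA.eigenvectorUnitary.2, Matrix.one_mul,
    Matrix.trace_diagonal]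
  push_cast
  rfl

lemma real_smul_eq (r : ℝ) (A : Matrix n n ℂ) : ((r : ℂ)) • A = r • A := by
  ext i j
  simp [Complex.real_smul]

lemma isHermitian_real_smul (r : ℝ) {A : Matrix n n ℂ} (hA : A.IsHermitian) :
    (r • A).IsHermitian := by
  rw [Matrix.IsHermitian, Matrix.conjTranspose_smul, star_trivial, hA]


/-- The Gibbs perturbation decreases the expected value of `Π`:
`Tr(Πρ*) ≤ Tr(Πσ)` for `ρ* = exp(log σ − Π/β)/Tr exp(log σ − Π/β)`. -/
theorem stmt14 (σ Pm : Matrix n n ℂ) (hσ : IsDensity σ) (hσpd : σ.PosDef)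
    (hPm : Pm.PosSemidef) (β : ℝ) (hβ : 0 < β) :
    let ρstar : Matrix n n ℂ :=
      ((matExp (matLog σ - (β : ℂ)⁻¹ • Pm)).trace)⁻¹ • matExp (matLog σ - (β : ℂ)⁻¹ • Pm)
    (Pm * ρstar).trace ≤ (Pm * σ).trace := by
  intro ρstar
  rcases isEmpty_or_nonempty n with hn | hn
  · simp [Matrix.trace]
  have hσh : σ.IsHermitian := hσpd.1
  have hL : (matLog σ).IsHermitian := matFun_isHermitian _ hσh
  have hsmul : (β : ℂ)⁻¹ • Pm = (β⁻¹ : ℝ) • Pm := by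
    rw [← Complex.ofReal_inv, real_smul_eq]
  have hHerm : (matLog σ - (β : ℂ)⁻¹ • Pm).IsHermitian := by
    rw [hsmul]
    exact hL.sub (isHermitian_real_smul _ hPm.1)
  set H : Matrix n n ℂ := matLog σ - (β : ℂ)⁻¹ • Pm with hHdef
  have hHsa : IsSelfAdjoint H := hHerm
  set z : ℝ := ∑ i, Real.exp (hHerm.eigenvalues i) with hz
  have hzpos : 0 < z := Finset.sum_pos (fun i _ => Real.exp_pos _) Finset.univ_nonempty
  have htrE : (matExp H).trace = (z : ℂ) := trace_matFun Real.exp hHerm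
  set g : ℝ → ℝ := fun x => z⁻¹ • Real.exp x with hg
  have hρ : ρstar = cfc g H := by
    show ((matExp H).trace)⁻¹ • matExp H = _
    rw [htrE, ← Complex.ofReal_inv, real_smul_eq, matExp, matFun_eq_cfc _ hHerm,
      ← cfc_smul z⁻¹ Real.exp H]
  have hρh : ρstar.IsHermitian := by
    rw [hρ]; exact cfc_predicate g H
  have hgpos : ∀ x, 0 < g x := fun x => by
    simp only [hg, smul_eq_mul]
    positivity
  have hρeig : ∀ i, 0 < hρh.eigenvalues i := by
    intro i
    have hmem := hρh.eigenvalues_mem_spectrum_real i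
    have hsp : spectrum ℝ ρstar = g '' spectrum ℝ H := by
      rw [hρ]; exact cfc_map_spectrum g H
    rw [hsp] at hmem
    obtain ⟨x, -, hx⟩ := hmem
    rw [← hx]; exact hgpos x
  -- compute matLog ρstar
  have hlog : matLog ρstar = algebraMap ℝ (Matrix n n ℂ) (-Real.log z) + H := by
    have hgcont : ContinuousOn Real.log (g '' spectrum ℝ H) := by
      apply Real.continuousOn_log.mono
      rintro - ⟨x, -, rfl⟩
      exact ne_of_gt (hgpos x)
    have hfcont : ContinuousOn g (spectrum ℝ H) := by
      simp only [hg]; fun_prop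
    rw [matLog, matFun_eq_cfc _ hρh, hρ, ← cfc_comp Real.log g H hHsa hgcont hfcont]
    have hcomp : Real.log ∘ g = fun x => (-Real.log z) + x := by
      funext x
      simp only [Function.comp_apply, hg, smul_eq_mul]
      rw [Real.log_mul (by positivity) (Real.exp_ne_zero _), Real.log_exp,
        Real.log_inv]
    rw [hcomp, cfc_const_add (-Real.log z) (fun x => x) H (by fun_prop) hHsa,
      cfc_id' ℝ H hHsa]
  -- Klein's inequality
  have hK := klein_aux hσh hρh (fun i => hσpd.eigenvalues_pos i) hρeig
  -- rewrite matLog σ - matLog ρstar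
  have hdiff : matLog σ - matLog ρstar = (β : ℂ)⁻¹ • Pm + ((Real.log z : ℝ) : ℂ) • (1 : Matrix n n ℂ) := by
    rw [hlog, Algebra.algebraMap_eq_smul_one, hHdef, real_smul_eq]
    push_cast
    module
  rw [hdiff] at hK
  have htrρ : ρstar.trace = 1 := by
    show (((matExp H).trace)⁻¹ • matExp H).trace = 1
    rw [Matrix.trace_smul, htrE, smul_eq_mul, inv_mul_cancel₀]
    exact_mod_cast ne_of_gt hzpos
  have hzero : (σ - ρstar).trace = 0 := by
    rw [Matrix.trace_sub, hσ.2, htrρ, sub_self]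
  have hsplit : ((σ - ρstar) * ((β : ℂ)⁻¹ • Pm + ((Real.log z : ℝ) : ℂ) • (1 : Matrix n n ℂ))).trace
      = (β : ℂ)⁻¹ * ((σ - ρstar) * Pm).trace := by
    rw [Matrix.mul_add, Matrix.trace_add, Matrix.mul_smul, Matrix.mul_smul,
      Matrix.mul_one, Matrix.trace_smul, Matrix.trace_smul, hzero, smul_zero, add_zero,
      smul_eq_mul]
  rw [hsplit] at hK
  have hT : 0 ≤ ((σ - ρstar) * Pm).trace := by
    have hb0 : (0 : ℂ) ≤ (β : ℂ) := by
      rw [show (0 : ℂ) = ((0 : ℝ) : ℂ) from rfl, Complex.real_le_real]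
      exact le_of_lt hβ
    have := mul_nonneg hb0 hK
    rwa [← mul_assoc, mul_inv_cancel₀ (by exact_mod_cast ne_of_gt hβ), one_mul] at this
  rw [Matrix.sub_mul, Matrix.trace_sub, sub_nonneg] at hT
  calc (Pm * ρstar).trace = (ρstar * Pm).trace := Matrix.trace_mul_comm _ _
    _ ≤ (σ * Pm).trace := hT
    _ = (Pm * σ).trace := Matrix.trace_mul_comm _ _
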